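/- Let A ∈ ℝ^{n×n} be block lower triangular, A = [[A₁, 0], [A₂₁, A₂]] with A₁ ∈ ℝ^{k×k}, let B = [B₁; B₂] ∈ ℝ^{n×m} be partitioned conformably, and let R = Rᵀ ∈ ℝ^{m×m}. Suppose Q₁ ∈ ℝ^{k×k} is a symmetric matrix with R + B₁ᵀQ₁B₁ invertible satisfying the reduced homogeneous algebraic Riccati equation Q₁ = A₁ᵀQ₁A₁ − A₁ᵀQ₁B₁(R + B₁ᵀQ₁B₁)^{−1}B₁ᵀQ₁A₁. Then the block matrix Q := [[Q₁, 0], [0, 0]] ∈ ℝ^{n×n} is symmetric, R + BᵀQB is invertible, and Q satisfies Q = AᵀQA − AᵀQB(R + BᵀQB)^{−1}BᵀQA. -/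

import Mathlib

open Matrix Polynomial

/-- `S` is an `A`-invariant subspace. -/
def AInvariant {n : Type*} [Fintype n] (A : Matrix n n ℝ)
    (S : Submodule ℝ (n → ℝ)) : Prop :=
  ∀ x ∈ S, A.mulVec x ∈ S

/-- The pair `(A, B)` is reachable: the only `A`-invariant subspace containing
the column space of `B` is the whole space. -/
def Reachable {n m : Type*} [Fintype n] [Fintype m] (A : Matrix n n ℝ)
    (B : Matrix n m ℝ) : Prop :=
  ∀ S : Submodule ℝ (n → ℝ), AInvariant A S → LinearMap.range B.mulVecLin ≤ S → S = ⊤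

/-- A real square matrix is unmixed if no two of its complex eigenvalues
(roots of its characteristic polynomial over ℂ) multiply to 1. -/
def Unmixed {n : Type*} [Fintype n] [DecidableEq n] (A : Matrix n n ℝ) : Prop :=
  ∀ μ₁ μ₂ : ℂ, (A.map (algebraMap ℝ ℂ)).charpoly.IsRoot μ₁ →
    (A.map (algebraMap ℝ ℂ)).charpoly.IsRoot μ₂ → μ₁ * μ₂ ≠ 1

/-- `Q` is a (symmetric) solution of the homogeneous algebraic Riccati equation
`Q = AᵀQA − AᵀQB(R + BᵀQB)⁻¹BᵀQA` (with `R + BᵀQB` invertible). -/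
def IsHARESol {n m : Type*} [Fintype n] [DecidableEq n] [Fintype m] [DecidableEq m]
    (A : Matrix n n ℝ) (B : Matrix n m ℝ) (R : Matrix m m ℝ)
    (Q : Matrix n n ℝ) : Prop :=
  Q.IsSymm ∧ IsUnit (R + Bᵀ * Q * B) ∧
    Q = Aᵀ * Q * A - Aᵀ * Q * B * (R + Bᵀ * Q * B)⁻¹ * (Bᵀ * Q * A)

/-- `P` is a (symmetric) solution of the Stein equation `A P Aᵀ − P = B R⁻¹ Bᵀ`. -/
def IsSteinSol {n m : Type*} [Fintype n] [DecidableEq n] [Fintype m] [DecidableEq m]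
    (A : Matrix n n ℝ) (B : Matrix n m ℝ) (R : Matrix m m ℝ)
    (P : Matrix n n ℝ) : Prop :=
  P.IsSymm ∧ A * P * Aᵀ - P = B * R⁻¹ * Bᵀ

/-- `Pr` is the matrix of the orthogonal projection onto the subspace `S`. -/
def IsOrthProjOnto {n : Type*} [Fintype n] (S : Submodule ℝ (n → ℝ))
    (Pr : Matrix n n ℝ) : Prop :=
  Pr.IsSymm ∧ Pr * Pr = Pr ∧ LinearMap.range Pr.mulVecLin = S

/-- `X` is the Moore–Penrose pseudoinverse of `M` (the four Penrose conditions). -/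
def IsMPPseudoinverse {n : Type*} [Fintype n] (M X : Matrix n n ℝ) : Prop :=
  M * X * M = M ∧ X * M * X = X ∧ (M * X)ᵀ = M * X ∧ (X * M)ᵀ = X * M

theorem block_extension_of_reduced_HARE_solution
    {k l m : ℕ} (A₁ : Matrix (Fin k) (Fin k) ℝ) (A₂₁ : Matrix (Fin l) (Fin k) ℝ)
    (A₂ : Matrix (Fin l) (Fin l) ℝ) (B₁ : Matrix (Fin k) (Fin m) ℝ)
    (B₂ : Matrix (Fin l) (Fin m) ℝ) (R : Matrix (Fin m) (Fin m) ℝ)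
    (hRsym : R.IsSymm)
    (Q₁ : Matrix (Fin k) (Fin k) ℝ) (hQ₁sym : Q₁.IsSymm)
    (hu : IsUnit (R + B₁ᵀ * Q₁ * B₁))
    (heq : Q₁ = A₁ᵀ * Q₁ * A₁ -
      A₁ᵀ * Q₁ * B₁ * (R + B₁ᵀ * Q₁ * B₁)⁻¹ * (B₁ᵀ * Q₁ * A₁)) :
    IsHARESol (Matrix.fromBlocks A₁ 0 A₂₁ A₂) (Matrix.fromRows B₁ B₂) R
      (Matrix.fromBlocks Q₁ 0 0 0) := by
  set Q : Matrix (Fin k ⊕ Fin l) (Fin k ⊕ Fin l) ℝ := Matrix.fromBlocks Q₁ 0 0 0 with hQ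
  set A : Matrix (Fin k ⊕ Fin l) (Fin k ⊕ Fin l) ℝ := Matrix.fromBlocks A₁ 0 A₂₁ A₂ with hA
  set B : Matrix (Fin k ⊕ Fin l) (Fin m) ℝ := Matrix.fromRows B₁ B₂ with hB
  have hBQ : Bᵀ * Q = Matrix.fromCols (B₁ᵀ * Q₁) (0 : Matrix (Fin m) (Fin l) ℝ) := by
    rw [hB, hQ, Matrix.transpose_fromRows, Matrix.fromCols_mul_fromBlocks]
    simp
  have hBQB : Bᵀ * Q * B = B₁ᵀ * Q₁ * B₁ := by
    rw [hBQ, hB, Matrix.fromCols_mul_fromRows]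
    simp
  have hAQ : Aᵀ * Q = Matrix.fromBlocks (A₁ᵀ * Q₁) 0 0 (0 : Matrix (Fin l) (Fin l) ℝ) := by
    rw [hA, hQ, Matrix.fromBlocks_transpose, Matrix.fromBlocks_multiply]
    simp
  refine ⟨?_, ?_, ?_⟩
  · rw [hQ]
    simp [Matrix.IsSymm, Matrix.fromBlocks_transpose, hQ₁sym.eq]
  · rw [hBQB]; exact hu
  · rw [hBQB, hAQ, hBQ, hQ, hA, hB]
    simp only [Matrix.fromBlocks_multiply, Matrix.fromBlocks_mul_fromRows,
      Matrix.fromRows_mul, Matrix.fromCols_mul_fromBlocks,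
      Matrix.fromRows_mul_fromCols, Matrix.zero_mul, Matrix.mul_zero,
      add_zero, zero_add, mul_zero, zero_mul]
    rw [Matrix.mul_fromCols,
      show (0 : Matrix (Fin l) (Fin k ⊕ Fin l) ℝ)
        = Matrix.fromCols (0 : Matrix (Fin l) (Fin k) ℝ) 0 from
        (Matrix.fromCols_zero).symm,
      Matrix.fromRows_fromCols_eq_fromBlocks, sub_eq_add_neg,
      Matrix.fromBlocks_neg, Matrix.fromBlocks_add]
    simp only [Matrix.mul_zero, neg_zero, add_zero, zero_add]
    rw [← sub_eq_add_neg, ← heq]
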